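/- In the graph Γ of self-intersections associated to a generic homotopy of closed curves, every vertex has degree 0, 1, or 2; more precisely, a vertex v corresponding to a self-intersection s of γ_{t_i} has degree 2 − x − y, where x = 1 if s is destroyed by a Type 1 deletion in the next move (and x = 0 otherwise) and y = 1 if s is created by a Type 1 creation in the previous move (and y = 0 otherwise). -/

import Mathlib

noncomputable section

/-- The target of the `follow` map of a Reidemeister move (defaulting to `0`). -/
def followTarget (follow : ℕ → ℕ → Option ℕ) (i v : ℕ) : ℕ :=
  (follow i v).getD 0

/-- The edge multiset of the graph `Γ` of self-intersections of a generic homotopy of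
closed curves: for each step `i` (a Reidemeister move between times `t_i` and `t_{i+1}`),
every surviving self-intersection `v` of `γ_{t_i}` is joined to the self-intersection of
`γ_{t_{i+1}}` it is followed to, and a Type 2 move additionally joins the pair of
annihilated (resp. created) self-intersections by an edge.  Vertices are pairs
`(i, v)` with `v` a self-intersection of `γ_{t_i}`. -/
def graphEdges (n : ℕ) (V : ℕ → Finset ℕ) (mt : ℕ → Fin 3)
    (follow : ℕ → ℕ → Option ℕ) (created destroyed : ℕ → Finset ℕ)
    (pairC pairD : ℕ → ℕ × ℕ) : Multiset ((ℕ × ℕ) × (ℕ × ℕ)) :=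
  ∑ i ∈ Finset.range n,
    (((V i \ destroyed i).val.map fun v => ((i, v), (i + 1, followTarget follow i v)))
      + (if mt i = 1 ∧ (destroyed i).Nonempty
          then {((i, (pairD i).1), (i, (pairD i).2))} else 0)
      + (if mt i = 1 ∧ (created i).Nonempty
          then {((i + 1, (pairC i).1), (i + 1, (pairC i).2))} else 0))

/-- The degree of a vertex: the number of incident edge-endpoints. -/
def vdeg (edges : Multiset ((ℕ × ℕ) × (ℕ × ℕ))) (v : ℕ × ℕ) : ℕ :=
  (edges.map fun e => (if e.1 = v then 1 else 0) + (if e.2 = v then 1 else 0)).sum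

def stepEdges (V : ℕ → Finset ℕ) (mt : ℕ → Fin 3) (follow : ℕ → ℕ → Option ℕ)
    (created destroyed : ℕ → Finset ℕ) (pairC pairD : ℕ → ℕ × ℕ) (i : ℕ) :
    Multiset ((ℕ × ℕ) × (ℕ × ℕ)) :=
  ((V i \ destroyed i).val.map fun v => ((i, v), (i + 1, followTarget follow i v)))
    + (if mt i = 1 ∧ (destroyed i).Nonempty
        then {((i, (pairD i).1), (i, (pairD i).2))} else 0)
    + (if mt i = 1 ∧ (created i).Nonempty
        then {((i + 1, (pairC i).1), (i + 1, (pairC i).2))} else 0)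

lemma vdeg_add (a b : Multiset ((ℕ × ℕ) × (ℕ × ℕ))) (v : ℕ × ℕ) :
    vdeg (a + b) v = vdeg a v + vdeg b v := by
  simp [vdeg]

lemma vdeg_sum {β : Type*} (s : Finset β) (f : β → Multiset ((ℕ × ℕ) × (ℕ × ℕ)))
    (v : ℕ × ℕ) : vdeg (∑ j ∈ s, f j) v = ∑ j ∈ s, vdeg (f j) v := by
  classical
  induction s using Finset.induction with
  | empty => simp [vdeg]
  | insert _ _ h ih => rw [Finset.sum_insert h, Finset.sum_insert h, vdeg_add, ih]

lemma vdeg_map (s : Finset ℕ) (f : ℕ → (ℕ × ℕ) × (ℕ × ℕ)) (v : ℕ × ℕ) :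
    vdeg (s.val.map f) v =
      ∑ w ∈ s, ((if (f w).1 = v then 1 else 0) + (if (f w).2 = v then 1 else 0)) := by
  rw [vdeg, Multiset.map_map]
  rfl

lemma vdeg_step_other (V : ℕ → Finset ℕ) (mt : ℕ → Fin 3) (follow : ℕ → ℕ → Option ℕ)
    (created destroyed : ℕ → Finset ℕ) (pairC pairD : ℕ → ℕ × ℕ) (j : ℕ) (p : ℕ × ℕ)
    (h1 : p.1 ≠ j) (h2 : p.1 ≠ j + 1) :
    vdeg (stepEdges V mt follow created destroyed pairC pairD j) p = 0 := by
  obtain ⟨pi, pv⟩ := p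
  simp only at h1 h2
  have hj : j ≠ pi := fun h => h1 h.symm
  have hj1 : j + 1 ≠ pi := fun h => h2 h.symm
  rw [stepEdges, vdeg_add, vdeg_add, vdeg_map]
  rw [Finset.sum_eq_zero (fun w _ => by simp [Prod.ext_iff, hj, hj1])]
  split_ifs <;> simp [vdeg, Prod.ext_iff, hj, hj1]

lemma fin3_cases (a : Fin 3) : a = 0 ∨ a = 1 ∨ a = 2 := by fin_cases a <;> simp

lemma vdeg_step_out (n : ℕ) (V : ℕ → Finset ℕ) (mt : ℕ → Fin 3)
    (follow : ℕ → ℕ → Option ℕ) (created destroyed : ℕ → Finset ℕ)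
    (pairC pairD : ℕ → ℕ × ℕ)
    (htype : ∀ i < n,
      (mt i = 0 → (destroyed i).card + (created i).card = 1) ∧
      (mt i = 1 → ((destroyed i).card = 2 ∧ created i = ∅) ∨
        ((created i).card = 2 ∧ destroyed i = ∅)) ∧
      (mt i = 2 → destroyed i = ∅ ∧ created i = ∅))
    (hpair : ∀ i < n,
      ((destroyed i).card = 2 →
        destroyed i = {(pairD i).1, (pairD i).2} ∧ (pairD i).1 ≠ (pairD i).2) ∧
      ((created i).card = 2 →
        created i = {(pairC i).1, (pairC i).2} ∧ (pairC i).1 ≠ (pairC i).2))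
    (i : ℕ) (hi : i < n) (v : ℕ) (hv : v ∈ V i) :
    vdeg (stepEdges V mt follow created destroyed pairC pairD i) (i, v) =
      if mt i = 0 ∧ v ∈ destroyed i then 0 else 1 := by
  have hii : i + 1 ≠ i := Nat.succ_ne_self i
  rw [stepEdges, vdeg_add, vdeg_add, vdeg_map]
  have hA : (∑ w ∈ V i \ destroyed i,
      ((if (((i, w), (i + 1, followTarget follow i w)) : (ℕ × ℕ) × (ℕ × ℕ)).1 = (i, v)
          then 1 else 0)
        + (if (((i, w), (i + 1, followTarget follow i w)) : (ℕ × ℕ) × (ℕ × ℕ)).2 = (i, v)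
          then 1 else 0)))
      = if v ∈ destroyed i then 0 else 1 := by
    have h1 : ∀ w ∈ V i \ destroyed i,
        ((if (((i, w), (i + 1, followTarget follow i w)) : (ℕ × ℕ) × (ℕ × ℕ)).1 = (i, v)
            then 1 else 0)
          + (if (((i, w), (i + 1, followTarget follow i w)) : (ℕ × ℕ) × (ℕ × ℕ)).2 = (i, v)
            then 1 else 0))
        = if w = v then 1 else 0 := by
      intro w _
      simp [Prod.ext_iff, hii]
    rw [Finset.sum_congr rfl h1, Finset.sum_ite_eq' (V i \ destroyed i) v (fun _ => 1)]
    by_cases hd : v ∈ destroyed i <;> simp [Finset.mem_sdiff, hv, hd]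
  have hC : vdeg (if mt i = 1 ∧ (created i).Nonempty
      then ({((i + 1, (pairC i).1), (i + 1, (pairC i).2))} : Multiset ((ℕ × ℕ) × (ℕ × ℕ)))
      else 0) (i, v) = 0 := by
    split_ifs <;> simp [vdeg, Prod.ext_iff, hii]
  rw [hA, hC]
  by_cases hd : v ∈ destroyed i
  · have hB : vdeg (if mt i = 1 ∧ (destroyed i).Nonempty
        then ({((i, (pairD i).1), (i, (pairD i).2))} : Multiset ((ℕ × ℕ) × (ℕ × ℕ)))
        else 0) (i, v) = if mt i = 1 then 1 else 0 := by
      rcases fin3_cases (mt i) with h0 | h1 | h2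
      · rw [if_neg (show ¬(mt i = 1 ∧ (destroyed i).Nonempty) from by simp [h0]),
          if_neg (show ¬(mt i = 1) from by simp [h0])]
        rfl
      · have hcard : (destroyed i).card = 2 := by
          rcases (htype i hi).2.1 h1 with ⟨h, _⟩ | ⟨_, h⟩
          · exact h
          · rw [h] at hd; simp at hd
        obtain ⟨hde, hne⟩ := (hpair i hi).1 hcard
        rw [if_pos (show mt i = 1 ∧ (destroyed i).Nonempty from ⟨h1, ⟨v, hd⟩⟩),
          if_pos h1]
        rw [hde] at hd
        simp only [Finset.mem_insert, Finset.mem_singleton] at hd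
        rcases hd with rfl | rfl
        · simp [vdeg, Prod.ext_iff, hne.symm]
        · simp [vdeg, Prod.ext_iff, hne]
      · exact absurd (((htype i hi).2.2 h2).1 ▸ hd) (Finset.notMem_empty v)
    rw [hB]
    rcases fin3_cases (mt i) with h0 | h1 | h2
    · simp [h0, hd]
    · simp [h1, hd]
    · exact absurd (((htype i hi).2.2 h2).1 ▸ hd) (Finset.notMem_empty v)
  · have hB : vdeg (if mt i = 1 ∧ (destroyed i).Nonempty
        then ({((i, (pairD i).1), (i, (pairD i).2))} : Multiset ((ℕ × ℕ) × (ℕ × ℕ)))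
        else 0) (i, v) = 0 := by
      split_ifs with h
      · obtain ⟨h1, h2⟩ := h
        have hcard : (destroyed i).card = 2 := by
          rcases (htype i hi).2.1 h1 with ⟨h, _⟩ | ⟨_, h⟩
          · exact h
          · rw [h] at h2; simp at h2
        obtain ⟨hde, hne⟩ := (hpair i hi).1 hcard
        have hv1 : (pairD i).1 ≠ v := fun h => hd (by rw [hde]; simp [h])
        have hv2 : (pairD i).2 ≠ v := fun h => hd (by rw [hde]; simp [h])
        simp [vdeg, Prod.ext_iff, hv1, hv2]
      · simp [vdeg]
    rw [hB]
    simp [hd]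

lemma vdeg_step_in (n : ℕ) (V : ℕ → Finset ℕ) (mt : ℕ → Fin 3)
    (follow : ℕ → ℕ → Option ℕ) (created destroyed : ℕ → Finset ℕ)
    (pairC pairD : ℕ → ℕ × ℕ)
    (hfol : ∀ i < n, ∀ v ∈ V i \ destroyed i,
      ∃ w ∈ V (i + 1) \ created i, follow i v = some w)
    (hinj : ∀ i < n, ∀ v ∈ V i \ destroyed i, ∀ v' ∈ V i \ destroyed i,
      follow i v = follow i v' → v = v')
    (hsurj : ∀ i < n, ∀ w ∈ V (i + 1) \ created i,
      ∃ v ∈ V i \ destroyed i, follow i v = some w)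
    (htype : ∀ i < n,
      (mt i = 0 → (destroyed i).card + (created i).card = 1) ∧
      (mt i = 1 → ((destroyed i).card = 2 ∧ created i = ∅) ∨
        ((created i).card = 2 ∧ destroyed i = ∅)) ∧
      (mt i = 2 → destroyed i = ∅ ∧ created i = ∅))
    (hpair : ∀ i < n,
      ((destroyed i).card = 2 →
        destroyed i = {(pairD i).1, (pairD i).2} ∧ (pairD i).1 ≠ (pairD i).2) ∧
      ((created i).card = 2 →
        created i = {(pairC i).1, (pairC i).2} ∧ (pairC i).1 ≠ (pairC i).2))
    (j : ℕ) (hj : j < n) (v : ℕ) (hv : v ∈ V (j + 1)) :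
    vdeg (stepEdges V mt follow created destroyed pairC pairD j) (j + 1, v) =
      if mt j = 0 ∧ v ∈ created j then 0 else 1 := by
  classical
  have hjj : j ≠ j + 1 := (Nat.succ_ne_self j).symm
  rw [stepEdges, vdeg_add, vdeg_add, vdeg_map]
  have hA : (∑ w ∈ V j \ destroyed j,
      ((if (((j, w), (j + 1, followTarget follow j w)) : (ℕ × ℕ) × (ℕ × ℕ)).1 = (j + 1, v)
          then 1 else 0)
        + (if (((j, w), (j + 1, followTarget follow j w)) : (ℕ × ℕ) × (ℕ × ℕ)).2 = (j + 1, v)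
          then 1 else 0)))
      = if v ∈ created j then 0 else 1 := by
    have h1 : ∀ w ∈ V j \ destroyed j,
        ((if (((j, w), (j + 1, followTarget follow j w)) : (ℕ × ℕ) × (ℕ × ℕ)).1 = (j + 1, v)
            then 1 else 0)
          + (if (((j, w), (j + 1, followTarget follow j w)) : (ℕ × ℕ) × (ℕ × ℕ)).2 = (j + 1, v)
            then 1 else 0))
        = if followTarget follow j w = v then 1 else 0 := by
      intro w _
      simp [Prod.ext_iff, hjj]
    rw [Finset.sum_congr rfl h1, ← Finset.card_filter]
    by_cases hc : v ∈ created j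
    · rw [if_pos hc]
      have : Finset.filter (fun w => followTarget follow j w = v) (V j \ destroyed j) = ∅ := by
        refine Finset.filter_eq_empty_iff.2 ?_
        intro w hw hft
        obtain ⟨w', hw', he⟩ := hfol j hj w hw
        rw [followTarget, he, Option.getD_some] at hft
        subst hft
        exact (Finset.mem_sdiff.1 hw').2 hc
      rw [this, Finset.card_empty]
    · rw [if_neg hc]
      obtain ⟨w0, hw0, he0⟩ := hsurj j hj v (Finset.mem_sdiff.2 ⟨hv, hc⟩)
      have : Finset.filter (fun w => followTarget follow j w = v) (V j \ destroyed j) = {w0} := by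
        ext w
        simp only [Finset.mem_filter, Finset.mem_singleton]
        constructor
        · rintro ⟨hw, hft⟩
          obtain ⟨w', hw', he⟩ := hfol j hj w hw
          rw [followTarget, he, Option.getD_some] at hft
          subst hft
          exact hinj j hj w hw w0 hw0 (by rw [he, he0])
        · rintro rfl
          exact ⟨hw0, by rw [followTarget, he0, Option.getD_some]⟩
      rw [this, Finset.card_singleton]
  have hB : vdeg (if mt j = 1 ∧ (destroyed j).Nonempty
      then ({((j, (pairD j).1), (j, (pairD j).2))} : Multiset ((ℕ × ℕ) × (ℕ × ℕ)))
      else 0) (j + 1, v) = 0 := by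
    split_ifs <;> simp [vdeg, Prod.ext_iff, hjj]
  rw [hA, hB]
  by_cases hc : v ∈ created j
  · have hC : vdeg (if mt j = 1 ∧ (created j).Nonempty
        then ({((j + 1, (pairC j).1), (j + 1, (pairC j).2))} : Multiset ((ℕ × ℕ) × (ℕ × ℕ)))
        else 0) (j + 1, v) = if mt j = 1 then 1 else 0 := by
      rcases fin3_cases (mt j) with h0 | h1 | h2
      · rw [if_neg (show ¬(mt j = 1 ∧ (created j).Nonempty) from by simp [h0]),
          if_neg (show ¬(mt j = 1) from by simp [h0])]
        rfl
      · have hcard : (created j).card = 2 := by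
          rcases (htype j hj).2.1 h1 with ⟨_, h⟩ | ⟨h, _⟩
          · rw [h] at hc; simp at hc
          · exact h
        obtain ⟨hce, hne⟩ := (hpair j hj).2 hcard
        rw [if_pos (show mt j = 1 ∧ (created j).Nonempty from ⟨h1, ⟨v, hc⟩⟩),
          if_pos h1]
        rw [hce] at hc
        simp only [Finset.mem_insert, Finset.mem_singleton] at hc
        rcases hc with rfl | rfl
        · simp [vdeg, Prod.ext_iff, hne.symm]
        · simp [vdeg, Prod.ext_iff, hne]
      · exact absurd (((htype j hj).2.2 h2).2 ▸ hc) (Finset.notMem_empty v)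
    rw [hC]
    rcases fin3_cases (mt j) with h0 | h1 | h2
    · simp [h0, hc]
    · simp [h1, hc]
    · exact absurd (((htype j hj).2.2 h2).2 ▸ hc) (Finset.notMem_empty v)
  · have hC : vdeg (if mt j = 1 ∧ (created j).Nonempty
        then ({((j + 1, (pairC j).1), (j + 1, (pairC j).2))} : Multiset ((ℕ × ℕ) × (ℕ × ℕ)))
        else 0) (j + 1, v) = 0 := by
      split_ifs with h
      · obtain ⟨h1, h2⟩ := h
        have hcard : (created j).card = 2 := by
          rcases (htype j hj).2.1 h1 with ⟨_, h⟩ | ⟨h, _⟩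
          · rw [h] at h2; simp at h2
          · exact h
        obtain ⟨hce, hne⟩ := (hpair j hj).2 hcard
        have hv1 : (pairC j).1 ≠ v := fun h => hc (by rw [hce]; simp [h])
        have hv2 : (pairC j).2 ≠ v := fun h => hc (by rw [hce]; simp [h])
        simp [vdeg, Prod.ext_iff, hv1, hv2]
      · simp [vdeg]
    rw [hC]
    simp [hc]

/-- **Lemma 3.2.**  In the graph `Γ` of self-intersections of a generic homotopy of closed
curves (decomposed into Reidemeister moves, the move between `t_i` and `t_{i+1}` being of
type `mt i + 1 ∈ {1,2,3}`, with `follow` tracking self-intersections forward, and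
`created`/`destroyed` recording the intersections created/destroyed by each move), every
vertex has degree `0`, `1` or `2`.  More precisely, a vertex `v ∈ V i` has degree
`2 - x - y`, where `x = 1` iff `v` is destroyed by a Type 1 deletion in the next move
(with the convention `x = 1` when `i` is the last index), and `y = 1` iff `v` is created
by a Type 1 creation in the previous move (with the convention `y = 1` when `i = 0`). -/
theorem graph_vertex_degree
    (n : ℕ) (V : ℕ → Finset ℕ) (mt : ℕ → Fin 3)
    (follow : ℕ → ℕ → Option ℕ) (created destroyed : ℕ → Finset ℕ)
    (pairC pairD : ℕ → ℕ × ℕ)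
    -- `destroyed i` consists of self-intersections at time `i`, `created i` of
    -- self-intersections at time `i+1`:
    (hsub : ∀ i < n, destroyed i ⊆ V i ∧ created i ⊆ V (i + 1))
    -- every surviving self-intersection is followed forward:
    (hfol : ∀ i < n, ∀ v ∈ V i \ destroyed i,
      ∃ w ∈ V (i + 1) \ created i, follow i v = some w)
    -- following forward is injective:
    (hinj : ∀ i < n, ∀ v ∈ V i \ destroyed i, ∀ v' ∈ V i \ destroyed i,
      follow i v = follow i v' → v = v')
    -- every self-intersection not created by the move comes from a previous one:
    (hsurj : ∀ i < n, ∀ w ∈ V (i + 1) \ created i,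
      ∃ v ∈ V i \ destroyed i, follow i v = some w)
    -- a Type 1 move creates or destroys exactly one self-intersection; a Type 2 move
    -- creates or destroys exactly two; a Type 3 move creates and destroys none:
    (htype : ∀ i < n,
      (mt i = 0 → (destroyed i).card + (created i).card = 1) ∧
      (mt i = 1 → ((destroyed i).card = 2 ∧ created i = ∅) ∨
        ((created i).card = 2 ∧ destroyed i = ∅)) ∧
      (mt i = 2 → destroyed i = ∅ ∧ created i = ∅))
    -- the pairs of intersections annihilated/created by Type 2 moves:
    (hpair : ∀ i < n,
      ((destroyed i).card = 2 →
        destroyed i = {(pairD i).1, (pairD i).2} ∧ (pairD i).1 ≠ (pairD i).2) ∧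
      ((created i).card = 2 →
        created i = {(pairC i).1, (pairC i).2} ∧ (pairC i).1 ≠ (pairC i).2))
    (i : ℕ) (hi : i ≤ n) (v : ℕ) (hv : v ∈ V i) :
    vdeg (graphEdges n V mt follow created destroyed pairC pairD) (i, v) =
      2 - (if i = n ∨ (mt i = 0 ∧ v ∈ destroyed i) then 1 else 0)
        - (if i = 0 ∨ (mt (i - 1) = 0 ∧ v ∈ created (i - 1)) then 1 else 0) ∧
    vdeg (graphEdges n V mt follow created destroyed pairC pairD) (i, v) ≤ 2 := by
  classical
  have hE : graphEdges n V mt follow created destroyed pairC pairD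
      = ∑ j ∈ Finset.range n, stepEdges V mt follow created destroyed pairC pairD j := rfl
  have key : vdeg (graphEdges n V mt follow created destroyed pairC pairD) (i, v)
      = (if i = n ∨ (mt i = 0 ∧ v ∈ destroyed i) then 0 else 1)
        + (if i = 0 ∨ (mt (i - 1) = 0 ∧ v ∈ created (i - 1)) then 0 else 1) := by
    rw [hE, vdeg_sum]
    have hfilter : ∀ x ∈ Finset.range n,
        vdeg (stepEdges V mt follow created destroyed pairC pairD x) (i, v) ≠ 0 →
        (i = x ∨ i = x + 1) := by
      intro x _ hne
      by_contra h
      push_neg at h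
      exact hne (vdeg_step_other V mt follow created destroyed pairC pairD x (i, v) h.1 h.2)
    rw [← Finset.sum_filter_of_ne hfilter]
    rcases Nat.eq_zero_or_pos i with rfl | hpos
    · rcases Nat.eq_zero_or_pos n with rfl | hn
      · simp
      · have hf : Finset.filter (fun x => (0 : ℕ) = x ∨ 0 = x + 1) (Finset.range n) = {0} := by
          ext x
          simp only [Finset.mem_filter, Finset.mem_range, Finset.mem_singleton]
          omega
        rw [hf, Finset.sum_singleton,
          vdeg_step_out n V mt follow created destroyed pairC pairD htype hpair 0 hn v hv]
        have hn0 : (0 : ℕ) ≠ n := by omega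
        simp [hn0]
    · obtain ⟨k, rfl⟩ : ∃ k, i = k + 1 := ⟨i - 1, by omega⟩
      rcases eq_or_lt_of_le hi with rfl | hlt
      · have hf : Finset.filter (fun x => k + 1 = x ∨ k + 1 = x + 1)
            (Finset.range (k + 1)) = {k} := by
          ext x
          simp only [Finset.mem_filter, Finset.mem_range, Finset.mem_singleton]
          omega
        rw [hf, Finset.sum_singleton,
          vdeg_step_in (k + 1) V mt follow created destroyed pairC pairD hfol hinj hsurj
            htype hpair k (by omega) v hv]
        simp
      · have hf : Finset.filter (fun x => k + 1 = x ∨ k + 1 = x + 1)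
            (Finset.range n) = {k, k + 1} := by
          ext x
          simp only [Finset.mem_filter, Finset.mem_range, Finset.mem_insert,
            Finset.mem_singleton]
          omega
        rw [hf, Finset.sum_pair (show k ≠ k + 1 by omega),
          vdeg_step_in n V mt follow created destroyed pairC pairD hfol hinj hsurj
            htype hpair k (by omega) v hv,
          vdeg_step_out n V mt follow created destroyed pairC pairD htype hpair (k + 1)
            hlt v hv]
        have hkn : k + 1 ≠ n := by omega
        simp only [Nat.add_sub_cancel, hkn, false_or, Nat.succ_ne_zero]
        rw [add_comm]
  refine ⟨?_, ?_⟩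
  · rw [key]
    split_ifs <;> norm_num
  · rw [key]
    split_ifs <;> norm_num
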